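/- Let D be a Delaunay polytope of an n-dimensional lattice L with circumcenter c. If 2c ∈ L + v for some vertex v of D (i.e. the circumcenter has denominator 2 in L relative to the vertices), then D is centrally symmetric with respect to c: for every vertex w of D, 2c − w is also a vertex of D. -/

import Mathlib

open scoped InnerProductSpace

/-- If `D` is a Delaunay polytope of a lattice `L` with circumcenter `c`,
and `2c ∈ L + v` for some vertex `v` of `D`, then `D` is centrally symmetric
with respect to `c`: for every vertex `w`, `2c − w` is again a vertex. -/
theorem stmt_8 (n : ℕ) (b : Module.Basis (Fin n) ℝ (EuclideanSpace ℝ (Fin n)))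
    (L : AddSubgroup (EuclideanSpace ℝ (Fin n)))
    (hL : (L : Set (EuclideanSpace ℝ (Fin n))) = ↑(Submodule.span ℤ (Set.range ⇑b)))
    (c : EuclideanSpace ℝ (Fin n)) (r : ℝ)
    (hempty : ∀ y ∈ L, r ≤ dist c y)
    (vert : Set (EuclideanSpace ℝ (Fin n)))
    (hvert : vert = {y | y ∈ L ∧ dist c y = r})
    (v : EuclideanSpace ℝ (Fin n)) (hv : v ∈ vert)
    (h2c : ∃ u ∈ L, (2 : ℝ) • c = u + v) :
    ∀ w ∈ vert, (2 : ℝ) • c - w ∈ vert := by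
  intro w hw
  subst hvert
  obtain ⟨hwL, hwd⟩ := hw
  obtain ⟨hvL, hvd⟩ := hv
  obtain ⟨u, huL, hu⟩ := h2c
  constructor
  · have : (2:ℝ) • c - w = u + v - w := by rw [hu]
    rw [this]
    exact L.sub_mem (L.add_mem huL hvL) hwL
  · have : dist c ((2:ℝ) • c - w) = dist c w := by
      rw [dist_eq_norm, dist_eq_norm]
      have : c - ((2:ℝ) • c - w) = -(c - w) := by
        module
      rw [this, norm_neg]
    rw [this, hwd]
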